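/- In the (2,2,2) scenario, the box P14 (defined by P14 x y a b = 1/2 if x = y and a = b, 0 if x = y and a ≠ b, and 1/4 if x ≠ y) belongs to Q_2. Explicitly, let ρ = |Φ⁺⟩⟨Φ⁺| be the rank-one density matrix on ℂ² ⊗ ℂ² associated with the unit vector Φ⁺ = (|00⟩ + |11⟩)/√2, and for each party define the projective measurements A x a = B x a = (1/2) • (1 + (-1)^(a+1) • σ_x'), where σ_0' = σZ (the Pauli Z matrix) and σ_1' = σX (the Pauli X matrix); then each A x a is positive semidefinite, ∑_a A x a = 1, and for all x, y, a, b the trace of ρ * (A x a ⊗ₖ B y b) equals P14 x y a b. -/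

import Mathlib

open Matrix Kronecker ComplexOrder

/-- A (2,m,v) box: a family of conditional probability distributions. -/
def IsBox (m v : ℕ) (p : Fin m → Fin m → Fin v → Fin v → ℝ) : Prop :=
  (∀ x y a b, 0 ≤ p x y a b) ∧ ∀ x y, ∑ a, ∑ b, p x y a b = 1

/-- A product box: `p x y a b = f x a * g y b` for local response functions `f`, `g`. -/
def IsProductBox (m v : ℕ) (p : Fin m → Fin m → Fin v → Fin v → ℝ) : Prop :=
  ∃ f g : Fin m → Fin v → ℝ,
    (∀ x a, 0 ≤ f x a) ∧ (∀ y b, 0 ≤ g y b) ∧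
    (∀ x, ∑ a, f x a = 1) ∧ (∀ y, ∑ b, g y b = 1) ∧
    ∀ x y a b, p x y a b = f x a * g y b

/-- Membership in `Q_d`: the box is realizable by a shared quantum state of local
dimension `d` together with local POVMs. -/
def IsQuantumBox (d m v : ℕ) (p : Fin m → Fin m → Fin v → Fin v → ℝ) : Prop :=
  ∃ (ρ : Matrix ((Fin d) × (Fin d)) ((Fin d) × (Fin d)) ℂ)
    (A B : Fin m → Fin v → Matrix (Fin d) (Fin d) ℂ),
    ρ.PosSemidef ∧ ρ.trace = 1 ∧
    (∀ x a, (A x a).PosSemidef) ∧ (∀ x, ∑ a, A x a = 1) ∧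
    (∀ y b, (B y b).PosSemidef) ∧ (∀ y, ∑ b, B y b = 1) ∧
    ∀ x y a b, (ρ * (A x a ⊗ₖ B y b)).trace = (p x y a b : ℂ)

/-- Membership in `L_N`: the box is realizable using shared classical randomness
of dimension `N`. -/
def IsLocalBox (N m v : ℕ) (p : Fin m → Fin m → Fin v → Fin v → ℝ) : Prop :=
  ∃ (w : Fin N → ℝ) (f g : Fin N → Fin m → Fin v → ℝ),
    (∀ l, 0 ≤ w l) ∧ (∑ l, w l = 1) ∧
    (∀ l x a, 0 ≤ f l x a) ∧ (∀ l y b, 0 ≤ g l y b) ∧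
    (∀ l x, ∑ a, f l x a = 1) ∧ (∀ l y, ∑ b, g l y b = 1) ∧
    ∀ x y a b, p x y a b = ∑ l, w l * f l x a * g l y b

/-- The box `P14`: perfectly correlated on equal inputs, uniformly random otherwise. -/
noncomputable def P14 : Fin 2 → Fin 2 → Fin 2 → Fin 2 → ℝ :=
  fun x y a b => if x = y then (if a = b then 1 / 2 else 0) else 1 / 4

/-- The unit vector `Φ⁺ = (|00⟩ + |11⟩)/√2`. -/
noncomputable def phiPlus : Fin 2 × Fin 2 → ℂ :=
  fun i => if i.1 = i.2 then ((1 / Real.sqrt 2 : ℝ) : ℂ) else 0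

/-- The rank-one density matrix `|Φ⁺⟩⟨Φ⁺|`. -/
noncomputable def rhoPhiPlus : Matrix ((Fin 2) × (Fin 2)) ((Fin 2) × (Fin 2)) ℂ :=
  Matrix.vecMulVec phiPlus (star phiPlus)

/-- The Pauli `Z` matrix. -/
def sigmaZ : Matrix (Fin 2) (Fin 2) ℂ := !![1, 0; 0, -1]

/-- The Pauli `X` matrix. -/
def sigmaX : Matrix (Fin 2) (Fin 2) ℂ := !![0, 1; 1, 0]

/-- The observable for input `x`: `σZ` for `x = 0` and `σX` for `x = 1`. -/
def sigma' : Fin 2 → Matrix (Fin 2) (Fin 2) ℂ := ![sigmaZ, sigmaX]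

/-- The projective measurement elements `A x a = (1/2)(1 + (-1)^(a+1) σ'_x)`. -/
noncomputable def Ameas : Fin 2 → Fin 2 → Matrix (Fin 2) (Fin 2) ℂ :=
  fun x a => (1 / 2 : ℂ) • ((1 : Matrix (Fin 2) (Fin 2) ℂ)
    + ((-1 : ℂ) ^ ((a : ℕ) + 1)) • sigma' x)


lemma rho_psd : rhoPhiPlus.PosSemidef := by
  rw [rhoPhiPlus, vecMulVec_eq Unit, ← conjTranspose_replicateCol]
  exact posSemidef_self_mul_conjTranspose _

lemma rho_apply (i j : Fin 2 × Fin 2) :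
    rhoPhiPlus i j = if i.1 = i.2 ∧ j.1 = j.2 then (1/2 : ℂ) else 0 := by
  simp only [rhoPhiPlus, vecMulVec_apply, Pi.star_apply, phiPlus]
  split_ifs with h1 h2 h3 h3 <;> simp_all
  rw [← Complex.ofReal_inv, ← Complex.ofReal_mul, ← mul_inv,
    Real.mul_self_sqrt (le_of_lt two_pos)]
  norm_num

lemma Ameas_psd (x a : Fin 2) : (Ameas x a).PosSemidef := by
  have h : Ameas x a = (Ameas x a)ᴴ * Ameas x a := by
    fin_cases x <;> fin_cases a <;>
      · ext i j
        fin_cases i <;> fin_cases j <;>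
          simp [Ameas, sigma', sigmaZ, sigmaX, mul_apply, Fin.sum_univ_two,
            Matrix.one_apply, Complex.conj_ofNat] <;> norm_num
  rw [h]; exact posSemidef_conjTranspose_mul_self _

lemma Ameas_sum (x : Fin 2) : ∑ a, Ameas x a = 1 := by
  simp [Fin.sum_univ_two, Ameas]
  module

lemma trace_rho_mul (M : Matrix ((Fin 2) × (Fin 2)) ((Fin 2) × (Fin 2)) ℂ) :
    (rhoPhiPlus * M).trace =
      (1/2 : ℂ) * (M (0,0) (0,0) + M (0,0) (1,1) + M (1,1) (0,0) + M (1,1) (1,1)) := by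
  simp [Matrix.trace, Matrix.diag, mul_apply, Fintype.sum_prod_type,
    Fin.sum_univ_two, rho_apply]
  ring

lemma rho_trace : rhoPhiPlus.trace = 1 := by
  have := trace_rho_mul 1
  simp [Matrix.one_apply] at this
  rw [this]; norm_num

lemma trace_Ameas (x y a b : Fin 2) :
    (rhoPhiPlus * (Ameas x a ⊗ₖ Ameas y b)).trace = (P14 x y a b : ℂ) := by
  fin_cases x <;> fin_cases y <;> fin_cases a <;> fin_cases b <;>
    · simp [trace_rho_mul, kroneckerMap_apply, Ameas, sigma', sigmaZ, sigmaX,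
        P14, Matrix.one_apply] <;> norm_num

/-- `P14` belongs to `Q_2`, realized explicitly by the maximally
entangled state `|Φ⁺⟩⟨Φ⁺|` with `σZ`/`σX` projective measurements. -/
theorem P14_in_Q2_explicit :
    rhoPhiPlus.PosSemidef ∧ rhoPhiPlus.trace = 1 ∧
    (∀ x a, (Ameas x a).PosSemidef) ∧ (∀ x, ∑ a, Ameas x a = 1) ∧
    (∀ x y a b,
      (rhoPhiPlus * (Ameas x a ⊗ₖ Ameas y b)).trace = (P14 x y a b : ℂ)) ∧
    IsQuantumBox 2 2 2 P14 := by
  refine ⟨rho_psd, rho_trace, Ameas_psd, Ameas_sum, trace_Ameas,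
    rhoPhiPlus, Ameas, Ameas, rho_psd, rho_trace, Ameas_psd, Ameas_sum,
    Ameas_psd, Ameas_sum, trace_Ameas⟩
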